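/- arXiv:2104.13910 — 4 statements merged into one kernel-verified Lean document; each statement's English description precedes it below -/
import Mathlib

section
/- If X ⊆ ℕ is infinite and the complement of X is hyperimmune, then there is a 1-generic set A with A ⊆ X; consequently A ∪ X = X. -/
open Classical in
/-- Characteristic sequence of a set of naturals. -/
noncomputable def chi (G : Set ℕ) : ℕ → Bool := fun n => decide (n ∈ G)

/-- Initial segment of length `k` of the characteristic sequence of `G`. -/
noncomputable def seg (G : Set ℕ) (k : ℕ) : List Bool := (List.range k).map (chi G)

/-- `G` is 1-generic: for every c.e. set `W` of binary strings, some initial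
segment of `G` lies in `W` or has no extension in `W`. -/
def OneGeneric (G : Set ℕ) : Prop :=
  ∀ W : Set (List Bool), REPred (· ∈ W) →
    ∃ k, seg G k ∈ W ∨ ∀ τ : List Bool, seg G k <+: τ → τ ∉ W

/-- A set of strings is dense if every string has an extension in it. -/
def DenseStrings (W : Set (List Bool)) : Prop := ∀ σ : List Bool, ∃ τ ∈ W, σ <+: τ

/-- `G` is weak-1-generic: `G` meets every dense c.e. set of strings. -/
def WeakOneGeneric (G : Set ℕ) : Prop :=
  ∀ W : Set (List Bool), REPred (· ∈ W) → DenseStrings W → ∃ k, seg G k ∈ W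

/-- Principal function of `I` (increasing enumeration). -/
noncomputable def princ (I : Set ℕ) : ℕ → ℕ := Nat.nth (· ∈ I)

/-- `I` is hyperimmune: infinite and its principal function is majorized by
no computable function. -/
def Hyperimmune (I : Set ℕ) : Prop :=
  I.Infinite ∧ ∀ f : ℕ → ℕ, Computable f → ∃ n, f n < princ I n

/-- The `I`-subsequence `A_I` of `A`, as a set: `A_I(n) = A(P_I(n))`. -/
def subseq (A I : Set ℕ) : Set ℕ := {n | princ I n ∈ A}

/-- The `I`-subsequence of an infinite binary sequence. -/
noncomputable def subseqFun (X : ℕ → Bool) (I : Set ℕ) : ℕ → Bool :=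
  fun n => X (princ I n)

def ComputableSet (I : Set ℕ) : Prop := ComputablePred (· ∈ I)

/-- Partial functions recursive in an oracle `O`. -/
inductive RecursiveIn' (O : ℕ →. ℕ) : (ℕ →. ℕ) → Prop
  | zero : RecursiveIn' O (pure 0)
  | succ : RecursiveIn' O ↑Nat.succ
  | left : RecursiveIn' O ↑fun n : ℕ => n.unpair.1
  | right : RecursiveIn' O ↑fun n : ℕ => n.unpair.2
  | oracle : RecursiveIn' O O
  | pair {f g} : RecursiveIn' O f → RecursiveIn' O g →
      RecursiveIn' O fun n => Nat.pair <$> f n <*> g n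
  | comp {f g} : RecursiveIn' O f → RecursiveIn' O g →
      RecursiveIn' O fun n => g n >>= f
  | prec {f g} : RecursiveIn' O f → RecursiveIn' O g →
      RecursiveIn' O (Nat.unpaired fun a n =>
        n.rec (f a) fun y IH => do { let i ← IH; g (Nat.pair a (Nat.pair y i)) })
  | rfind {f} : RecursiveIn' O f →
      RecursiveIn' O fun a => Nat.rfind fun n => (fun m => m = 0) <$> f (Nat.pair a n)

open Classical in
noncomputable def charFun (A : Set ℕ) : ℕ →. ℕ :=
  fun n => Part.some (if n ∈ A then 1 else 0)

/-- `A` Turing-computes `B`. -/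
def TuringComputes (A B : Set ℕ) : Prop := RecursiveIn' (charFun A) (charFun B)

/-- The halting problem `∅′`. -/
def HaltingProblem : Set ℕ :=
  {n | ((Denumerable.ofNat Nat.Partrec.Code n).eval n).Dom}

/-- `I` is wild. -/
def Wild (I : Set ℕ) : Prop :=
  ¬ComputableSet I ∧ ∃ f : ℕ → ℕ, Computable f ∧ StrictMono f ∧
    (∀ n, (I ∩ Set.Ioo (f n) (f (n + 1))).Nonempty) ∧
    ¬Computable fun n => (I ∩ Set.Ioo (f n) (f (n + 1))).ncard

/-- `I` is tame. -/
def Tame (I : Set ℕ) : Prop :=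
  ¬ComputableSet I ∧ ∃ f : ℕ → ℕ, Computable f ∧ StrictMono f ∧
    (∀ n, (I ∩ Set.Ioo (f n) (f (n + 1))).Nonempty) ∧
    Computable fun n => (I ∩ Set.Ioo (f n) (f (n + 1))).ncard

/-- The string `ρ` meets `S`: some initial segment of `ρ` is in `S`. -/
def MeetsStr (ρ : List Bool) (S : Set (List Bool)) : Prop := ∃ σ ∈ S, σ <+: ρ

/-- The sequence `X` meets `S`: some initial segment of `X` is in `S`. -/
def MeetsSeq (X : ℕ → Bool) (S : Set (List Bool)) : Prop :=
  ∃ k, (List.range k).map X ∈ S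

/-- `l, t` are suitable for `S`. -/
def SuitableFor (S : Set (List Bool)) (l : ℕ → ℕ) (t : ℕ → List Bool) : Prop :=
  l 0 = 0 ∧ (∀ n, l (n + 1) = l n + (t n).length) ∧
    ∀ (X : ℕ → Bool) (n m : ℕ), m ≤ l n →
      MeetsStr ((List.range m).map X ++ t n) S

/-- The collection `D` has property `(*)`. -/
def HasStar (D : ℕ → Set (List Bool)) : Prop :=
  ∀ i, ∃ l t, SuitableFor (D i) l t ∧ ∀ n, ∃ j, D j =
    {s | ∃ (σ τ ρ : List Bool) (m : ℕ), m > n ∧ σ.length = l (2 * m) ∧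
      τ = t (2 * m) ∧ ρ = t (2 * m + 1) ∧ s = σ ++ τ ++ ρ}

/-- The `e`-th c.e. set of binary strings. -/
def ceSet (e : ℕ) : Set (List Bool) :=
  {σ | ((Denumerable.ofNat Nat.Partrec.Code e).eval (Encodable.encode σ)).Dom}

open Classical in
/-- The `I`-subsequence of a finite string. -/
noncomputable def subseqStr (τ : List Bool) (I : Set ℕ) : List Bool :=
  (List.range τ.length).filterMap fun k => if k ∈ I then τ[k]? else none


section AuxJockusch

open Nat.Partrec (Code)
open Nat.Partrec.Code
open Encodable

/-- Every c.e. set of strings is `ceSet e` for some `e`. -/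
theorem repred_eq_ceSet {W : Set (List Bool)} (h : REPred (· ∈ W)) :
    ∃ e, W = ceSet e := by
  have hinner : Partrec fun σ : List Bool =>
      (Part.assert (σ ∈ W) fun _ => Part.some ()).map fun _ => (0 : ℕ) :=
    h.map ((Computable.const 0).comp Computable.fst).to₂
  have hF : Partrec fun n : ℕ => (Part.ofOption (decode (α := List Bool) n)).bind
      fun σ => (Part.assert (σ ∈ W) fun _ => Part.some ()).map fun _ => (0 : ℕ) :=
    (Computable.decode.ofOption).bind (hinner.comp Computable.snd)
  obtain ⟨c, hc⟩ := exists_code.1 (Partrec.nat_iff.1 hF)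
  refine ⟨encode c, ?_⟩
  ext σ
  have : Denumerable.ofNat Code (encode c) = c := Denumerable.ofNat_encode c
  simp only [ceSet, Set.mem_setOf_eq, this, hc]
  simp [Part.ofOption, encodek, Part.bind, Part.assert]

theorem search_lemma (c : Code) (β : List Bool)
    (hii : ∀ n : ℕ, ∃ ρ : List Bool, (β ++ List.replicate n false <+: ρ) ∧
      (c.eval (encode ρ)).Dom) :
    ∃ g : ℕ → ℕ, Computable g ∧ ∀ n : ℕ, ∃ ρ : List Bool,
      (β ++ List.replicate n false <+: ρ) ∧ (c.eval (encode ρ)).Dom ∧ ρ.length < g n := by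
  classical
  set fn : ℕ → ℕ → Option ℕ := fun n s =>
    (decode (α := List Bool) s.unpair.2).bind fun γ =>
      bif (evaln s.unpair.1 c (encode (β ++ List.replicate n false ++ γ))).isSome
      then some ((β ++ List.replicate n false ++ γ).length + 1) else none with hfn
  have hrep : Primrec fun n : ℕ => List.replicate n false := by
    have : Primrec fun n : ℕ => (List.range n).map fun _ => false :=
      Primrec.list_map Primrec.list_range (Primrec.const false).to₂
    exact this.of_eq fun n => by simp [List.map_const]
  have htau : Primrec fun x : (ℕ × ℕ) × List Bool =>
      β ++ List.replicate x.1.1 false ++ x.2 :=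
    Primrec.list_append.comp
      (Primrec.list_append.comp (Primrec.const β)
        (hrep.comp (Primrec.fst.comp Primrec.fst))) Primrec.snd
  have hcond : Primrec fun x : (ℕ × ℕ) × List Bool =>
      (evaln x.1.2.unpair.1 c (encode (β ++ List.replicate x.1.1 false ++ x.2))).isSome := by
    have := primrec_evaln.comp
      ((((Primrec.fst.comp (Primrec.unpair.comp (Primrec.snd.comp Primrec.fst))).pair
        (Primrec.const c)).pair (Primrec.encode.comp htau)) :
          Primrec fun x : (ℕ × ℕ) × List Bool =>
            ((x.1.2.unpair.1, c), encode (β ++ List.replicate x.1.1 false ++ x.2)))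
    exact Primrec.option_isSome.comp this
  have hfnc : Computable₂ fn := by
    have : Primrec₂ fn := by
      refine Primrec.option_bind
        (Primrec.decode.comp (Primrec.snd.comp (Primrec.unpair.comp Primrec.snd))) ?_
      exact (Primrec.cond hcond
        (Primrec.option_some.comp (Primrec.succ.comp (Primrec.list_length.comp htau)))
        (Primrec.const none)).to₂
    exact this.to_comp
  have hdom : ∀ n, (Nat.rfindOpt (fn n)).Dom := by
    intro n
    obtain ⟨ρ, hpre, hd⟩ := hii n
    obtain ⟨x, hx⟩ := Part.dom_iff_mem.1 hd
    obtain ⟨k, hk⟩ := evaln_complete.1 hx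
    set γ := ρ.drop (β ++ List.replicate n false).length with hγ
    obtain ⟨δ, hδ⟩ := hpre
    have hρeq : β ++ List.replicate n false ++ γ = ρ := by
      rw [hγ, ← hδ, List.drop_left]
    refine Nat.rfindOpt_dom.2 ⟨Nat.pair k (encode γ), ρ.length + 1, ?_⟩
    have hsome : (evaln k c (encode ρ)).isSome = true := Option.isSome_iff_exists.2 ⟨x, hk⟩
    show ((decode (α := List Bool) (Nat.pair k (encode γ)).unpair.2).bind fun γ' =>
      bif (evaln (Nat.pair k (encode γ)).unpair.1 c
        (encode (β ++ List.replicate n false ++ γ'))).isSome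
      then some ((β ++ List.replicate n false ++ γ').length + 1) else none) = some (ρ.length + 1)
    rw [Nat.unpair_pair]
    simp only [encodek, Option.bind_some, hρeq, hsome, cond_true]
  refine ⟨fun n => (Nat.rfindOpt (fn n)).get (hdom n), ?_, ?_⟩
  · exact (Partrec.rfindOpt hfnc).of_eq_tot fun n => Part.get_mem (hdom n)
  · intro n
    show ∃ ρ : List Bool, (β ++ List.replicate n false <+: ρ) ∧ (c.eval (encode ρ)).Dom ∧
      ρ.length < (Nat.rfindOpt (fn n)).get (hdom n)
    have hmem := Part.get_mem (hdom n)
    obtain ⟨s, hs⟩ := Nat.rfindOpt_spec hmem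
    rw [Option.mem_def] at hs
    conv_lhs at hs => rw [hfn]
    simp only [Option.bind_eq_some_iff] at hs
    obtain ⟨γ, _, hcondeq⟩ := hs
    set τ := β ++ List.replicate n false ++ γ with hτ
    by_cases hb : (evaln s.unpair.1 c (encode τ)).isSome
    · rw [hb] at hcondeq
      simp only [cond_true, Option.some.injEq] at hcondeq
      refine ⟨τ, ?_, ?_, ?_⟩
      · exact List.prefix_append (β ++ List.replicate n false) γ
      · obtain ⟨x, hx⟩ := Option.isSome_iff_exists.1 hb
        exact Part.dom_iff_mem.2 ⟨x, evaln_sound hx⟩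
      · omega
    · simp only [Bool.not_eq_true] at hb
      rw [hb] at hcondeq
      simp at hcondeq

theorem no_hyper {H : Set ℕ} {g : ℕ → ℕ} (hg : Computable g)
    (hint : ∀ n, ∃ m, m ∈ H ∧ n ≤ m ∧ m < g n) : ¬ Hyperimmune H := by
  rintro ⟨hinf, hmaj⟩
  set F : ℕ → ℕ := fun k => Nat.rec (g 0) (fun _ ih => g ih) k with hF
  have hFc : Computable F := by
    have := Computable.nat_rec (Computable.id (α := ℕ)) (Computable.const (g 0))
      ((hg.comp (Computable.snd.comp Computable.snd)).to₂ :
        Computable₂ fun (_ : ℕ) (p : ℕ × ℕ) => g p.2)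
    exact this.of_eq fun k => rfl
  have hlt : ∀ k, Nat.nth (· ∈ H) k < F k := by
    intro k
    induction k with
    | zero =>
      obtain ⟨m, hm, _, hltm⟩ := hint 0
      have h0 : Nat.nth (· ∈ H) 0 ≤ m := by
        rw [Nat.nth_zero]; exact Nat.sInf_le hm
      exact lt_of_le_of_lt h0 hltm
    | succ k ih =>
      obtain ⟨m, hm, hge, hltm⟩ := hint (F k)
      have h1 : Nat.nth (· ∈ H) (k + 1) ≤ m := by
        by_contra hcon
        push_neg at hcon
        have := Nat.le_nth_of_lt_nth_succ hcon hm
        omega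
      exact lt_of_le_of_lt h1 hltm
  obtain ⟨n, hn⟩ := hmaj F hFc
  have := hlt n
  simp only [princ] at hn
  omega

/-- `σ` takes value `false` on `H`. -/
def ConsB (H : Set ℕ) (σ : List Bool) : Prop :=
  ∀ m ∈ H, ∀ h : m < σ.length, σ[m] = false

theorem consB_append (H : Set ℕ) (σ : List Bool) (n : ℕ) (h : ConsB H σ) :
    ConsB H (σ ++ List.replicate n false) := by
  intro m hm hlen
  by_cases hl : m < σ.length
  · rw [List.getElem_append_left hl]
    exact h m hm hl
  · rw [List.getElem_append_right (le_of_not_gt hl)]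
    exact List.getElem_replicate ..

theorem ext_step (H : Set ℕ) (hH : Hyperimmune H) (σ : List Bool) (hσ : ConsB H σ) (e : ℕ) :
    ∃ τ, σ <+: τ ∧ ConsB H τ ∧ (τ ∈ ceSet e ∨ ∀ ρ, τ <+: ρ → ρ ∉ ceSet e) := by
  by_cases h1 : ∃ τ, σ <+: τ ∧ ConsB H τ ∧ τ ∈ ceSet e
  · obtain ⟨τ, h⟩ := h1
    exact ⟨τ, h.1, h.2.1, Or.inl h.2.2⟩
  by_cases h2 : ∃ n, ∀ ρ, (σ ++ List.replicate n false) <+: ρ → ρ ∉ ceSet e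
  · obtain ⟨n, hn⟩ := h2
    exact ⟨σ ++ List.replicate n false, List.prefix_append _ _,
      consB_append H σ n hσ, Or.inr hn⟩
  exfalso
  push_neg at h2
  set c := Denumerable.ofNat Nat.Partrec.Code e with hc
  have hii : ∀ n, ∃ ρ : List Bool, (σ ++ List.replicate n false <+: ρ) ∧
      (c.eval (encode ρ)).Dom := by
    intro n
    obtain ⟨ρ, hp, hmem⟩ := h2 n
    exact ⟨ρ, hp, hmem⟩
  obtain ⟨g, hgc, hg⟩ := search_lemma c σ hii
  refine no_hyper hgc ?_ hH
  intro n
  obtain ⟨ρ, hpre, hdm, hlen⟩ := hg n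
  have hρmem : ρ ∈ ceSet e := hdm
  have hσρ : σ <+: ρ := (List.prefix_append σ _).trans hpre
  have hnc : ¬ ConsB H ρ := fun hcons => h1 ⟨ρ, hσρ, hcons, hρmem⟩
  simp only [ConsB, not_forall] at hnc
  obtain ⟨m, hmH, hmlt, hmt⟩ := hnc
  rw [Bool.not_eq_false] at hmt
  have hge : σ.length + n ≤ m := by
    by_contra hcon
    push_neg at hcon
    have hlen' : m < (σ ++ List.replicate n false).length := by simp; omega
    have heq := hpre.getElem hlen'
    have hfalse := consB_append H σ n hσ m hmH hlen'
    rw [heq] at hfalse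
    simp [hmt] at hfalse
  exact ⟨m, hmH, by omega, by omega⟩

end AuxJockusch


section TowerJockusch

/-- The recursively constructed tower of consistent strings. -/
noncomputable def tower (H : Set ℕ) (hH : Hyperimmune H) : ℕ → {σ : List Bool // ConsB H σ}
  | 0 => ⟨[], fun _ _ h => absurd h (by simp)⟩
  | e + 1 =>
    let p := tower H hH e
    ⟨Classical.choose (ext_step H hH p.1 p.2 e),
      (Classical.choose_spec (ext_step H hH p.1 p.2 e)).2.1⟩

theorem tower_succ_spec (H : Set ℕ) (hH : Hyperimmune H) (e : ℕ) :
    (tower H hH e).1 <+: (tower H hH (e + 1)).1 ∧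
      ((tower H hH (e + 1)).1 ∈ ceSet e ∨
        ∀ ρ, (tower H hH (e + 1)).1 <+: ρ → ρ ∉ ceSet e) := by
  have h := Classical.choose_spec (ext_step H hH (tower H hH e).1 (tower H hH e).2 e)
  exact ⟨h.1, h.2.2⟩

theorem tower_mono (H : Set ℕ) (hH : Hyperimmune H) {e e' : ℕ} (h : e ≤ e') :
    (tower H hH e).1 <+: (tower H hH e').1 := by
  induction e', h using Nat.le_induction with
  | base => exact List.prefix_refl _
  | succ e' _ ih => exact ih.trans (tower_succ_spec H hH e').1

/-- The generic set built from the tower. -/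
def genSet (H : Set ℕ) (hH : Hyperimmune H) : Set ℕ :=
  {n | ∃ e, ∃ h : n < (tower H hH e).1.length, ((tower H hH e).1)[n] = true}

theorem seg_tower (H : Set ℕ) (hH : Hyperimmune H) (e : ℕ) :
    seg (genSet H hH) ((tower H hH e).1.length) = (tower H hH e).1 := by
  apply List.ext_getElem
  · simp [seg]
  · intro n h1 h2
    simp only [seg, List.getElem_map, List.getElem_range]
    rcases ht : ((tower H hH e).1)[n] with _ | _
    · show chi (genSet H hH) n = false
      simp only [chi]
      refine @decide_eq_false _ (Classical.propDecidable _) ?_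
      rintro ⟨e', h', ht'⟩
      rcases le_total e e' with hle | hle
      · have hp := tower_mono H hH hle
        have heq := hp.getElem h2
        rw [ht] at heq
        simp [ht'] at heq
      · have hp := tower_mono H hH hle
        have heq := hp.getElem h'
        rw [ht'] at heq
        simp [ht] at heq
    · show chi (genSet H hH) n = true
      simp only [chi]
      exact @decide_eq_true _ (Classical.propDecidable _) ⟨e, h2, ht⟩

end TowerJockusch

theorem oneGeneric_subset_of_compl_hyperimmune (X : Set ℕ) (hX : X.Infinite)
    (hc : Hyperimmune Xᶜ) : ∃ A : Set ℕ, OneGeneric A ∧ A ⊆ X ∧ A ∪ X = X := by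
  have hsub : genSet Xᶜ hc ⊆ X := by
    rintro n ⟨e, h, ht⟩
    by_contra hnX
    have hmem : n ∈ Xᶜ := hnX
    have hfalse := (tower Xᶜ hc e).2 n hmem h
    rw [ht] at hfalse
    simp at hfalse
  refine ⟨genSet Xᶜ hc, ?_, hsub, Set.union_eq_self_of_subset_left hsub⟩
  intro W hW
  obtain ⟨e, rfl⟩ := repred_eq_ceSet hW
  obtain ⟨hpre, hspec⟩ := tower_succ_spec Xᶜ hc e
  refine ⟨(tower Xᶜ hc (e + 1)).1.length, ?_⟩
  rw [seg_tower]
  exact hspec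
end

section
/- There is a non-computable set I ⊆ ℕ that is a subsequence set for weak-1-genericity: for every weak-1-generic G, the subsequence G_I is weak-1-generic. -/
namespace SubseqAux
open Nat.Partrec (Code)
open Nat.Partrec.Code

/-! ### Boolean list combinators -/

lemma primrec_lany {α β : Type*} [Primcodable α] [Primcodable β] {f : α → List β}
    {p : α → β → Bool} (hf : Primrec f) (hp : Primrec₂ p) :
    Primrec fun a => (f a).any (p a) := by
  have hh : Primrec₂ fun (a : α) (bs : β × Bool) => bif p a bs.1 then true else bs.2 :=
    Primrec.cond (hp.comp Primrec.fst (Primrec.fst.comp Primrec.snd))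
      (Primrec.const true) (Primrec.snd.comp Primrec.snd)
  have := Primrec.list_foldr hf (Primrec.const false) hh
  refine this.of_eq fun a => ?_
  have hfun : (fun (b : β) (s : Bool) => bif p a b then true else s)
      = fun b s => p a b || s := by funext b s; cases p a b <;> simp
  simp only [hfun]
  induction f a with
  | nil => simp
  | cons b l ih => simp [ih]

lemma primrec_lall {α β : Type*} [Primcodable α] [Primcodable β] {f : α → List β}
    {p : α → β → Bool} (hf : Primrec f) (hp : Primrec₂ p) :
    Primrec fun a => (f a).all (p a) := by
  have hh : Primrec₂ fun (a : α) (bs : β × Bool) => bif p a bs.1 then bs.2 else false :=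
    Primrec.cond (hp.comp Primrec.fst (Primrec.fst.comp Primrec.snd))
      (Primrec.snd.comp Primrec.snd) (Primrec.const false)
  have := Primrec.list_foldr hf (Primrec.const true) hh
  refine this.of_eq fun a => ?_
  have hfun : (fun (b : β) (s : Bool) => bif p a b then s else false)
      = fun b s => p a b && s := by funext b s; cases p a b <;> simp
  simp only [hfun]
  induction f a with
  | nil => simp
  | cons b l ih => simp [ih]

lemma pr_band {α : Type*} [Primcodable α] {f g : α → Bool} (hf : Primrec f)
    (hg : Primrec g) : Primrec fun a => f a && g a :=
  (Primrec.cond hf hg (Primrec.const false)).of_eq fun a => by cases f a <;> simp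

/-! ### dup3, takeF, allBin -/

def dup3 (y : List Bool) : List Bool := y.flatMap fun b => [b, b, b]

@[simp] lemma dup3_nil : dup3 [] = [] := rfl

@[simp] lemma dup3_cons (b : Bool) (y : List Bool) :
    dup3 (b :: y) = b :: b :: b :: dup3 y := rfl

lemma dup3_length (y : List Bool) : (dup3 y).length = 3 * y.length := by
  induction y with
  | nil => simp
  | cons b y ih => simp [ih]; omega

lemma dup3_getElem? (y : List Bool) (j r : ℕ) (hr : r < 3) :
    (dup3 y)[3 * j + r]? = y[j]? := by
  induction y generalizing j with
  | nil => simp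
  | cons b y ih =>
    cases j with
    | zero => interval_cases r <;> simp
    | succ j =>
      have h1 : 3 * (j + 1) + r = (3 * j + r) + 1 + 1 + 1 := by ring
      rw [h1, dup3_cons]
      simp only [List.getElem?_cons_succ]
      exact ih j

def takeF (z : List Bool) (m : ℕ) : List Bool :=
  (List.range m).map fun i => z.getD i false

lemma takeF_eq_take (z : List Bool) (m : ℕ) (h : m ≤ z.length) :
    takeF z m = z.take m := by
  apply List.ext_getElem
  · simp [takeF]; omega
  · intro i h1 h2
    simp only [takeF, List.length_map, List.length_range] at h1
    simp [takeF, List.getD_eq_getElem?_getD, List.getElem?_eq_getElem (h1.trans_le h), h1]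

lemma primrec_takeF : Primrec₂ takeF :=
  Primrec.list_map (Primrec.list_range.comp Primrec.snd)
    ((Primrec.list_getD false).comp₂ (Primrec.fst.comp Primrec.fst) Primrec.snd)

def allBin : ℕ → List (List Bool) :=
  fun k => Nat.rec [([] : List Bool)]
    (fun _ prev => prev.flatMap fun x => [false :: x, true :: x]) k

@[simp] lemma mem_allBin (k : ℕ) (x : List Bool) : x ∈ allBin k ↔ x.length = k := by
  induction k generalizing x with
  | zero => simp [allBin]
  | succ k ih =>
    show x ∈ (allBin k).flatMap _ ↔ _
    simp only [List.mem_flatMap, List.mem_cons]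
    constructor
    · rintro ⟨y, hy, h | h | h⟩ <;> (try subst h) <;> simp_all [ih]
    · intro hx
      match x with
      | [] => simp at hx
      | b :: t =>
        refine ⟨t, (ih t).2 (by simpa using hx), ?_⟩
        cases b <;> simp

lemma primrec_allBin : Primrec allBin := by
  have hg : Primrec₂ fun (_ : ℕ × List (List Bool)) (x : List Bool) =>
      [false :: x, true :: x] :=
    Primrec.list_cons.comp₂
      (Primrec.list_cons.comp₂ (Primrec₂.const false) Primrec₂.right)
      (Primrec.list_cons.comp₂
        (Primrec.list_cons.comp₂ (Primrec₂.const true) Primrec₂.right)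
        (Primrec₂.const []))
  have hstep : Primrec₂ fun (_ : ℕ) (prev : List (List Bool)) =>
      prev.flatMap fun x => [false :: x, true :: x] :=
    Primrec.list_flatMap Primrec.snd hg
  exact Primrec.nat_rec₁ _ hstep

end SubseqAux

namespace SubseqAux
open Nat.Partrec (Code)
open Nat.Partrec.Code

/-! ### The matrix -/

def strOk (ρ : List Bool) (k : ℕ) : Bool :=
  (decide (ρ.length = 3 * k + 3 * ((ρ.length - 3 * k) / 3))) &&
  (List.range ((ρ.length - 3 * k) / 3)).all fun j =>
    (decide (ρ.getD (3 * k + 3 * j) false = ρ.getD (3 * k + 3 * j + 1) false)) &&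
    (decide (ρ.getD (3 * k + 3 * j + 2) false = ρ.getD (3 * k + 3 * j + 1) false))

def extractY (ρ : List Bool) (k : ℕ) : List Bool :=
  (List.range ((ρ.length - 3 * k) / 3)).map fun j => ρ.getD (3 * k + 3 * j + 1) false

def mCheck (c : Code) (z : List Bool) (s : ℕ) : Bool :=
  (List.range (z.length + 1)).any fun m =>
    (evaln s c (Encodable.encode (takeF z m))).isSome

def matB (c : Code) (ρ : List Bool) (s : ℕ) : Bool :=
  (List.range (ρ.length + 1)).any fun k =>
    strOk ρ k && (allBin k).all fun x => mCheck c (x ++ extractY ρ k) s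

section PrimrecProofs

open Primrec

private lemma h3k : Primrec₂ fun (ρ : List Bool) (k : ℕ) => 3 * k :=
  nat_mul.comp₂ (Primrec₂.const 3) Primrec₂.right

private lemma hquot : Primrec₂ fun (ρ : List Bool) (k : ℕ) => (ρ.length - 3 * k) / 3 :=
  nat_div.comp₂ (nat_sub.comp₂ (list_length.comp₂ Primrec₂.left) h3k) (Primrec₂.const 3)

private lemma primrec_strOk : Primrec₂ strOk := by
  have hlen : Primrec₂ fun (ρ : List Bool) (k : ℕ) =>
      decide (ρ.length = 3 * k + 3 * ((ρ.length - 3 * k) / 3)) :=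
    (Primrec.eq.comp₂ (list_length.comp₂ Primrec₂.left)
      (nat_add.comp₂ h3k (nat_mul.comp₂ (Primrec₂.const 3) hquot))).decide
  have hinner : Primrec₂ fun (p : List Bool × ℕ) (j : ℕ) =>
      (decide (p.1.getD (3 * p.2 + 3 * j) false = p.1.getD (3 * p.2 + 3 * j + 1) false)) &&
      (decide (p.1.getD (3 * p.2 + 3 * j + 2) false = p.1.getD (3 * p.2 + 3 * j + 1) false)) := by
    have hρ : Primrec fun q : (List Bool × ℕ) × ℕ => q.1.1 := fst.comp fst
    have hbase : Primrec fun q : (List Bool × ℕ) × ℕ => 3 * q.1.2 + 3 * q.2 :=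
      nat_add.comp (nat_mul.comp (const 3) (snd.comp fst)) (nat_mul.comp (const 3) snd)
    have h0 : Primrec fun q : (List Bool × ℕ) × ℕ => q.1.1.getD (3 * q.1.2 + 3 * q.2) false :=
      (list_getD false).comp hρ hbase
    have h1 : Primrec fun q : (List Bool × ℕ) × ℕ => q.1.1.getD (3 * q.1.2 + 3 * q.2 + 1) false :=
      (list_getD false).comp hρ (succ.comp hbase)
    have h2 : Primrec fun q : (List Bool × ℕ) × ℕ => q.1.1.getD (3 * q.1.2 + 3 * q.2 + 2) false :=
      (list_getD false).comp hρ (succ.comp (succ.comp hbase))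
    exact pr_band (Primrec.eq.comp h0 h1).decide (Primrec.eq.comp h2 h1).decide
  exact pr_band hlen
    (primrec_lall (list_range.comp hquot) hinner)

private lemma primrec_extractY : Primrec₂ extractY := by
  have hbase : Primrec fun q : (List Bool × ℕ) × ℕ => 3 * q.1.2 + 3 * q.2 + 1 :=
    succ.comp (nat_add.comp (nat_mul.comp (const 3) (snd.comp fst))
      (nat_mul.comp (const 3) snd))
  have hg : Primrec₂ fun (p : List Bool × ℕ) (j : ℕ) =>
      p.1.getD (3 * p.2 + 3 * j + 1) false :=
    (list_getD false).comp (fst.comp fst) hbase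
  exact list_map (list_range.comp hquot) hg

private lemma primrec_mCheck (c : Code) : Primrec₂ (mCheck c) := by
  have hev : Primrec₂ fun (p : List Bool × ℕ) (m : ℕ) =>
      (evaln p.2 c (Encodable.encode (takeF p.1 m))).isSome := by
    have : Primrec fun q : (List Bool × ℕ) × ℕ =>
        evaln q.1.2 c (Encodable.encode (takeF q.1.1 q.2)) :=
      primrec_evaln.comp
        ((Primrec.pair (Primrec.pair (snd.comp fst) (const c))
          (Primrec.encode.comp (primrec_takeF.comp (fst.comp fst) snd))))
    exact option_isSome.comp this
  exact primrec_lany (list_range.comp (succ.comp (list_length.comp fst))) hev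

lemma primrec_matB (c : Code) : Primrec₂ (matB c) := by
  have hin : Primrec fun r : ((List Bool × ℕ) × ℕ) × List Bool =>
      mCheck c (r.2 ++ extractY r.1.1.1 r.1.2) r.1.1.2 :=
    (primrec_mCheck c).comp
      (list_append.comp snd
        (primrec_extractY.comp ((fst.comp fst).comp fst) (snd.comp fst)))
      ((snd.comp fst).comp fst)
  have hall : Primrec fun q : (List Bool × ℕ) × ℕ =>
      (allBin q.2).all fun x => mCheck c (x ++ extractY q.1.1 q.2) q.1.2 :=
    primrec_lall (primrec_allBin.comp snd) hin
  have hp : Primrec₂ fun (p : List Bool × ℕ) (k : ℕ) =>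
      strOk p.1 k && ((allBin k).all fun x => mCheck c (x ++ extractY p.1 k) p.2) :=
    pr_band (primrec_strOk.comp (fst.comp fst) snd) hall
  exact primrec_lany (list_range.comp (succ.comp (list_length.comp fst))) hp

end PrimrecProofs

end SubseqAux

namespace SubseqAux
open Nat.Partrec (Code)
open Nat.Partrec.Code

/-! ### The set V and its equivalence with the matrix -/

def MeetsStr' (ρ : List Bool) (S : Set (List Bool)) : Prop := ∃ σ ∈ S, σ <+: ρ

def V (W : Set (List Bool)) : Set (List Bool) :=
  {ρ | ∃ (k : ℕ) (y : List Bool), ρ.length = 3 * k + 3 * y.length ∧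
    ρ.drop (3 * k) = dup3 y ∧
    ∀ x : List Bool, x.length = k → MeetsStr' (x ++ y) W}

lemma evaln_isSome_mono {s s' : ℕ} {c : Code} {n : ℕ} (h : s ≤ s')
    (hs : (evaln s c n).isSome) : (evaln s' c n).isSome := by
  rw [Option.isSome_iff_exists] at hs ⊢
  obtain ⟨a, ha⟩ := hs
  exact ⟨a, evaln_mono h ha⟩

lemma exists_uniform {α : Type*} (L : List α) (Q : α → ℕ → Prop)
    (mono : ∀ a s s', s ≤ s' → Q a s → Q a s')
    (h : ∀ a ∈ L, ∃ s, Q a s) : ∃ s, ∀ a ∈ L, Q a s := by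
  induction L with
  | nil => exact ⟨0, by simp⟩
  | cons a L ih =>
    obtain ⟨s1, hs1⟩ := h a (by simp)
    obtain ⟨s2, hs2⟩ := ih fun b hb => h b (by simp [hb])
    refine ⟨max s1 s2, ?_⟩
    intro b hb
    rcases List.mem_cons.1 hb with rfl | hb'
    · exact mono b s1 _ (le_max_left _ _) hs1
    · exact mono b s2 _ (le_max_right _ _) (hs2 b hb')

section WithCode

variable {W : Set (List Bool)} {c : Code}
  (hc : ∀ σ : List Bool, σ ∈ W ↔ ∃ s, (evaln s c (Encodable.encode σ)).isSome)

include hc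

lemma mCheck_iff (z : List Bool) :
    (∃ s, mCheck c z s = true) ↔ MeetsStr' z W := by
  constructor
  · rintro ⟨s, hs⟩
    obtain ⟨m, hm, hev⟩ := by simpa [mCheck, List.mem_range, Nat.lt_succ_iff] using hs
    refine ⟨takeF z m, (hc _).2 ⟨s, hev⟩, ?_⟩
    rw [takeF_eq_take z m hm]
    exact List.take_prefix m z
  · rintro ⟨σ, hσ, hpre⟩
    obtain ⟨s, hs⟩ := (hc σ).1 hσ
    refine ⟨s, ?_⟩
    have hlen : σ.length ≤ z.length := hpre.length_le
    have : takeF z σ.length = σ := by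
      rw [takeF_eq_take z _ hlen, ← List.prefix_iff_eq_take.1 hpre]
    simp only [mCheck, List.any_eq_true, List.mem_range, Nat.lt_succ_iff]
    exact ⟨σ.length, hlen, by rw [this]; exact hs⟩

lemma mem_V_iff (ρ : List Bool) : ρ ∈ V W ↔ ∃ s, matB c ρ s = true := by
  constructor
  · rintro ⟨k, y, hlen, hdrop, hmeet⟩
    -- basic numerology
    have hq : (ρ.length - 3 * k) / 3 = y.length := by omega
    have hkle : k ≤ ρ.length := by omega
    -- elements of ρ beyond 3k
    have helem : ∀ j r : ℕ, j < y.length → r < 3 →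
        ρ.getD (3 * k + (3 * j + r)) false = y.getD j false := by
      intro j r hj hr
      have h1 : ρ[3 * k + (3 * j + r)]? = (ρ.drop (3 * k))[3 * j + r]? := by
        rw [List.getElem?_drop]
      rw [List.getD_eq_getElem?_getD, List.getD_eq_getElem?_getD, h1, hdrop,
        dup3_getElem? y j r hr]
    have hY : extractY ρ k = y := by
      apply List.ext_getElem
      · simp [extractY, hq]
      · intro i h1 h2
        simp only [extractY, hq, List.getElem_map, List.getElem_range] at h1 ⊢
        have := helem i 1 (by simpa [hq] using h2) (by norm_num)
        simp only [List.getD_eq_getElem?_getD, List.getElem?_eq_getElem h2,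
          Option.getD_some] at this ⊢
        rw [show 3 * k + 3 * i + 1 = 3 * k + (3 * i + 1) by ring]
        exact this
    have hstr : strOk ρ k = true := by
      simp only [strOk, Bool.and_eq_true, decide_eq_true_eq, List.all_eq_true,
        List.mem_range, hq]
      refine ⟨by omega, fun j hj => ?_⟩
      have h0 := helem j 0 hj (by norm_num)
      have h1 := helem j 1 hj (by norm_num)
      have h2 := helem j 2 hj (by norm_num)
      rw [show 3 * k + (3 * j + 0) = 3 * k + 3 * j by ring] at h0
      rw [show 3 * k + (3 * j + 1) = 3 * k + 3 * j + 1 by ring] at h1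
      rw [show 3 * k + (3 * j + 2) = 3 * k + 3 * j + 2 by ring] at h2
      exact ⟨h0.trans h1.symm, h2.trans h1.symm⟩
    -- find a uniform stage
    have hms : ∀ x ∈ allBin k, ∃ s, mCheck c (x ++ y) s = true := by
      intro x hx
      exact (mCheck_iff hc (x ++ y)).2 (hmeet x ((mem_allBin k x).1 hx))
    have hmono : ∀ (x : List Bool) (s s' : ℕ), s ≤ s' →
        mCheck c (x ++ y) s = true → mCheck c (x ++ y) s' = true := by
      intro x s s' hss hQ
      simp only [mCheck, List.any_eq_true, List.mem_range] at hQ ⊢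
      obtain ⟨m, hm, hev⟩ := hQ
      exact ⟨m, hm, evaln_isSome_mono hss hev⟩
    obtain ⟨s, hs⟩ := exists_uniform (allBin k)
      (fun x s => mCheck c (x ++ y) s = true) hmono hms
    refine ⟨s, ?_⟩
    simp only [matB, List.any_eq_true, List.mem_range, Nat.lt_succ_iff]
    refine ⟨k, hkle, ?_⟩
    rw [hstr, hY]
    simp only [Bool.true_and, List.all_eq_true]
    exact fun x hx => hs x hx
  · rintro ⟨s, hs⟩
    simp only [matB, List.any_eq_true, List.mem_range, Nat.lt_succ_iff,
      Bool.and_eq_true] at hs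
    obtain ⟨k, hk, hstr, hall⟩ := hs
    simp only [strOk, Bool.and_eq_true, decide_eq_true_eq, List.all_eq_true,
      List.mem_range] at hstr
    obtain ⟨hlen, hblocks⟩ := hstr
    set q := (ρ.length - 3 * k) / 3 with hqdef
    set y := extractY ρ k with hydef
    have hylen : y.length = q := by simp [hydef, extractY, hqdef]
    have hyget : ∀ j, j < q → y.getD j false = ρ.getD (3 * k + 3 * j + 1) false := by
      intro j hj
      simp only [hydef, extractY, ← hqdef]
      rw [List.getD_eq_getElem?_getD, List.getElem?_map, List.getElem?_range hj]
      simp [List.getD_eq_getElem?_getD]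
    refine ⟨k, y, by omega, ?_, ?_⟩
    · -- drop = dup3
      apply List.ext_getElem?
      intro i
      by_cases hi : i < 3 * q
      · have hj : i / 3 < q := by omega
        have hr : i % 3 < 3 := Nat.mod_lt _ (by norm_num)
        have hidx : 3 * (i / 3) + i % 3 = i := by omega
        have hlt : 3 * k + i < ρ.length := by omega
        have hylt : i / 3 < y.length := by omega
        rw [List.getElem?_drop, ← hidx, dup3_getElem? y _ _ hr]
        rw [List.getElem?_eq_getElem (by omega : 3 * k + (3 * (i/3) + i%3) < ρ.length),
          List.getElem?_eq_getElem hylt]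
        have hb := hblocks (i / 3) hj
        have h1 := hyget (i / 3) hj
        have hval : ρ.getD (3 * k + (3 * (i/3) + i % 3)) false
            = y.getD (i / 3) false := by
          rcases (by omega : i % 3 = 0 ∨ i % 3 = 1 ∨ i % 3 = 2) with h | h | h <;> rw [h]
          · rw [show 3*k + (3*(i/3) + 0) = 3*k + 3*(i/3) by ring, hb.1, ← h1]
          · rw [show 3*k + (3*(i/3) + 1) = 3*k + 3*(i/3) + 1 by ring, ← h1]
          · rw [show 3*k + (3*(i/3) + 2) = 3*k + 3*(i/3) + 2 by ring, hb.2, ← h1]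
        simp only [List.getD_eq_getElem?_getD,
          List.getElem?_eq_getElem (by omega : 3 * k + (3 * (i/3) + i%3) < ρ.length),
          List.getElem?_eq_getElem hylt, Option.getD_some] at hval h1 ⊢
        exact congrArg some hval
      · rw [List.getElem?_eq_none, List.getElem?_eq_none]
        · rw [dup3_length]; omega
        · simp only [List.length_drop]; omega
    · intro x hx
      have hxmem : x ∈ allBin k := (mem_allBin k x).2 hx
      exact (mCheck_iff hc (x ++ y)).1 ⟨s, List.all_eq_true.1 hall x hxmem⟩

end WithCode

end SubseqAux

namespace SubseqAux
open Nat.Partrec (Code)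
open Nat.Partrec.Code

lemma re_V {W : Set (List Bool)} {c : Code}
    (hc : ∀ σ : List Bool, σ ∈ W ↔ ∃ s, (evaln s c (Encodable.encode σ)).isSome) :
    REPred (· ∈ V W) := by
  have h1 : Partrec fun ρ : List Bool => Nat.rfind fun s => Part.some (matB c ρ s) := by
    apply Partrec.rfind
    exact (Primrec₂.to_comp (primrec_matB c)).partrec₂
  have h2 := h1.dom_re
  apply h2.of_eq
  intro ρ
  refine (Nat.rfind_dom (p := fun s => Part.some (matB c ρ s))).trans ?_
  constructor
  · rintro ⟨s, hs, _⟩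
    exact (mem_V_iff hc ρ).2 ⟨s, by simpa using hs⟩
  · intro h
    obtain ⟨s, hs⟩ := (mem_V_iff hc ρ).1 h
    exact ⟨s, by simpa using hs, fun {_} _ => trivial⟩

lemma MeetsStr'_mono {ρ ρ' : List Bool} {S : Set (List Bool)} (h : MeetsStr' ρ S)
    (hp : ρ <+: ρ') : MeetsStr' ρ' S :=
  let ⟨σ, hσ, hpre⟩ := h
  ⟨σ, hσ, hpre.trans hp⟩

lemma exists_suitable {W : Set (List Bool)} (hd : DenseStrings W) (L : List (List Bool)) :
    ∃ y : List Bool, ∀ x ∈ L, MeetsStr' (x ++ y) W := by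
  induction L with
  | nil => exact ⟨[], by simp⟩
  | cons x L ih =>
    obtain ⟨y, hy⟩ := ih
    obtain ⟨w, hw, hpre⟩ := hd (x ++ y)
    obtain ⟨d, rfl⟩ := hpre
    refine ⟨y ++ d, ?_⟩
    intro x' hx'
    rcases List.mem_cons.1 hx' with rfl | hx'
    · exact ⟨x' ++ y ++ d, hw, by rw [List.append_assoc]⟩
    · exact MeetsStr'_mono (hy x' hx') ⟨d, by rw [List.append_assoc]⟩

lemma dense_V {W : Set (List Bool)} (hd : DenseStrings W) : DenseStrings (V W) := by
  intro σ
  set k := σ.length with hk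
  set τ := σ ++ List.replicate (3 * k - k) false with hτ
  have hτlen : τ.length = 3 * k := by simp [hτ]; omega
  obtain ⟨y, hy⟩ := exists_suitable hd (allBin k)
  refine ⟨τ ++ dup3 y, ⟨k, y, ?_, ?_, ?_⟩, ?_⟩
  · simp [List.length_append, hτlen, dup3_length]
  · rw [← hτlen, List.drop_left]
  · intro x hx
    exact hy x ((mem_allBin k x).2 hx)
  · exact ⟨List.replicate (3 * k - k) false ++ dup3 y, by simp [hτ]⟩

end SubseqAux

namespace SubseqAux
open Nat.Partrec (Code)
open Nat.Partrec.Code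

lemma exists_code_of_re {W : Set (List Bool)} (h : REPred (· ∈ W)) :
    ∃ c : Code, ∀ σ : List Bool, σ ∈ W ↔ ∃ s, (evaln s c (Encodable.encode σ)).isSome := by
  have h' : Nat.Partrec fun n =>
      Part.bind (Encodable.decode (α := List Bool) n) fun a =>
        ((Part.assert (a ∈ W) fun _ => Part.some ()).map Encodable.encode) := h
  obtain ⟨c, hc⟩ := exists_code.1 h'
  refine ⟨c, fun σ => ?_⟩
  have heval : c.eval (Encodable.encode σ)
      = (Part.assert (σ ∈ W) fun _ => Part.some ()).map Encodable.encode := by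
    rw [hc]; simp [Encodable.encodek]
  constructor
  · intro hσ
    have hdom : (c.eval (Encodable.encode σ)).Dom := by
      rw [heval]; exact ⟨hσ, trivial⟩
    obtain ⟨a, ha⟩ := Part.dom_iff_mem.1 hdom
    obtain ⟨s, hs⟩ := evaln_complete.1 ha
    exact ⟨s, Option.isSome_iff_exists.2 ⟨a, hs⟩⟩
  · rintro ⟨s, hs⟩
    obtain ⟨a, ha⟩ := Option.isSome_iff_exists.1 hs
    have hmem : a ∈ c.eval (Encodable.encode σ) := evaln_complete.2 ⟨s, ha⟩
    have hdom : (c.eval (Encodable.encode σ)).Dom := Part.dom_iff_mem.2 ⟨a, hmem⟩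
    rw [heval] at hdom
    exact hdom.1

lemma halting_not_computable : ¬ComputablePred (· ∈ HaltingProblem) := by
  intro h
  have hnot : ComputablePred fun n => ¬ n ∈ HaltingProblem := h.not
  have hre : REPred fun n => ¬ n ∈ HaltingProblem := hnot.to_re
  have h' : Nat.Partrec fun n =>
      Part.bind (Encodable.decode (α := ℕ) n) fun a =>
        ((Part.assert (¬ a ∈ HaltingProblem) fun _ => Part.some ()).map
          Encodable.encode) := hre
  obtain ⟨c, hc⟩ := exists_code.1 h'
  have hdiag : ∀ n : ℕ, (c.eval n).Dom ↔ ¬ n ∈ HaltingProblem := by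
    intro n
    have hev : c.eval n = (Part.assert (¬ n ∈ HaltingProblem) fun _ =>
        Part.some ()).map Encodable.encode := by
      rw [hc]
      simp [show (Encodable.decode (α := ℕ) n) = some n from rfl]
    rw [hev]
    exact ⟨fun hd => hd.1, fun hd => ⟨hd, trivial⟩⟩
  set n₀ := Encodable.encode c with hn₀
  have h1 : n₀ ∈ HaltingProblem ↔ (c.eval n₀).Dom := by
    show ((Denumerable.ofNat Nat.Partrec.Code n₀).eval n₀).Dom ↔ _
    rw [hn₀, Denumerable.ofNat_encode]
  have h2 := hdiag n₀
  tauto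

open Classical in
noncomputable def gfun (n : ℕ) : ℕ := if n ∈ HaltingProblem then 3 * n + 1 else 3 * n + 2

lemma gfun_strictMono : StrictMono gfun := by
  intro a b h; unfold gfun; split_ifs <;> omega

def ISet : Set ℕ := Set.range gfun

lemma mem_ISet_iff (n : ℕ) : 3 * n + 1 ∈ ISet ↔ n ∈ HaltingProblem := by
  constructor
  · rintro ⟨m, hm⟩
    unfold gfun at hm
    split_ifs at hm with h
    · have : m = n := by omega
      subst this; exact h
    · omega
  · intro h; exact ⟨n, by simp [gfun, h]⟩

lemma ISet_not_computable : ¬ ComputableSet ISet := by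
  intro h
  apply halting_not_computable
  rcases ComputablePred.computable_iff.1 h with ⟨f, hf, hfe⟩
  refine ComputablePred.computable_iff.2 ⟨fun n => f (3 * n + 1), ?_, ?_⟩
  · exact hf.comp (Primrec.to_comp
      (Primrec.succ.comp (Primrec.nat_mul.comp (Primrec.const 3) Primrec.id)))
  · funext n
    have h1 : (3 * n + 1 ∈ ISet) = (f (3 * n + 1) : Prop) := congrFun hfe (3 * n + 1)
    exact propext ((mem_ISet_iff n).symm.trans (iff_of_eq h1))

lemma count_ISet (n : ℕ) [DecidablePred (· ∈ ISet)] :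
    Nat.count (· ∈ ISet) (gfun n) = n := by
  rw [Nat.count_eq_card_filter_range]
  have he : {m ∈ Finset.range (gfun n) | m ∈ ISet} = (Finset.range n).image gfun := by
    ext m
    simp only [Finset.mem_filter, Finset.mem_range, Finset.mem_image]
    constructor
    · rintro ⟨hlt, j, rfl⟩
      exact ⟨j, gfun_strictMono.lt_iff_lt.1 hlt, rfl⟩
    · rintro ⟨j, hj, rfl⟩
      exact ⟨gfun_strictMono.lt_iff_lt.2 hj, j, rfl⟩
  rw [he, Finset.card_image_of_injective _ gfun_strictMono.injective, Finset.card_range]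

lemma princ_ISet : princ ISet = gfun := by
  funext n
  letI : DecidablePred (· ∈ ISet) := fun _ => Classical.propDecidable _
  have h2 := Nat.nth_count (p := (· ∈ ISet)) (n := gfun n) ⟨n, rfl⟩
  rw [count_ISet n] at h2
  exact h2

end SubseqAux

namespace SubseqAux

lemma seg_length (G : Set ℕ) (k : ℕ) : (seg G k).length = k := by simp [seg]

lemma chi_subseq (G I : Set ℕ) (n : ℕ) : chi (subseq G I) n = chi G (princ I n) := by
  simp only [chi]
  exact decide_eq_decide.2 Iff.rfl

lemma seg_take (X : Set ℕ) (t K : ℕ) (h : t ≤ K) : (seg X K).take t = seg X t := by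
  simp [seg, ← List.map_take, List.take_range, Nat.min_eq_left h]

end SubseqAux

theorem exists_noncomputable_subsequenceSet_for_weakOneGenericity :
    ∃ I : Set ℕ, ¬ ComputableSet I ∧
      ∀ G : Set ℕ, WeakOneGeneric G → WeakOneGeneric (subseq G I) := by
  classical
  refine ⟨SubseqAux.ISet, SubseqAux.ISet_not_computable, ?_⟩
  intro G hG W hre hdense
  obtain ⟨c, hc⟩ := SubseqAux.exists_code_of_re hre
  have hVre : REPred (· ∈ SubseqAux.V W) := SubseqAux.re_V hc
  have hVdense : DenseStrings (SubseqAux.V W) := SubseqAux.dense_V hdense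
  obtain ⟨m, hm⟩ := hG (SubseqAux.V W) hVre hVdense
  obtain ⟨k, y, hlen, hdrop, hmeet⟩ := hm
  rw [SubseqAux.seg_length] at hlen
  set x : List Bool := (List.range k).map fun n => chi G (SubseqAux.gfun n) with hx
  have hxlen : x.length = k := by simp [hx]
  have hseg : seg (subseq G SubseqAux.ISet) (k + y.length) = x ++ y := by
    apply List.ext_getElem
    · simp [SubseqAux.seg_length, hxlen]
    intro i h1 h2
    rw [SubseqAux.seg_length] at h1
    have hlhs : (seg (subseq G SubseqAux.ISet) (k + y.length))[i]'(by
        rw [SubseqAux.seg_length]; exact h1) = chi G (SubseqAux.gfun i) := by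
      simp [seg, SubseqAux.chi_subseq, SubseqAux.princ_ISet]
    rw [hlhs]
    by_cases hik : i < k
    · rw [List.getElem_append_left (by omega : i < x.length)]
      simp [hx]
    · have hj : i - k < y.length := by
        have : i < k + y.length := h1
        omega
      rw [List.getElem_append_right (by omega : x.length ≤ i)]
      have key : ∀ r : ℕ, 1 ≤ r → r ≤ 2 →
          chi G (3 * i + r) = y[i - k]'hj := by
        intro r hr1 hr2
        have h3 : 3 * k + (3 * (i - k) + r) = 3 * i + r := by omega
        have hidx : 3 * i + r < m := by omega
        have e1 : (seg G m)[3 * i + r]? = some (chi G (3 * i + r)) := by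
          simp [seg, List.getElem?_map, List.getElem?_range, hidx]
        have e2 : (seg G m)[3 * i + r]? = y[i - k]? := by
          rw [← h3, ← List.getElem?_drop, hdrop,
            SubseqAux.dup3_getElem? y _ r (by omega)]
        rw [List.getElem?_eq_getElem hj] at e2
        rw [e1] at e2
        exact Option.some.inj e2
      have hgi : SubseqAux.gfun i = 3 * i + 1 ∨ SubseqAux.gfun i = 3 * i + 2 := by
        unfold SubseqAux.gfun
        split_ifs <;> simp
      have hxl : x.length = k := hxlen
      rcases hgi with h | h <;> rw [h] <;> simp only [hxl] <;>
        [exact key 1 le_rfl (by norm_num); exact key 2 (by norm_num) le_rfl]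
  have hmeet' := hmeet x hxlen
  obtain ⟨w, hwW, hpre⟩ := hmeet'
  refine ⟨w.length, ?_⟩
  have hwle : w.length ≤ k + y.length := by
    have := hpre.length_le
    simpa [hxlen] using this
  have hw : seg (subseq G SubseqAux.ISet) w.length = w := by
    rw [← SubseqAux.seg_take _ _ _ hwle, hseg, ← List.prefix_iff_eq_take.1 hpre]
  rw [hw]
  exact hwW
end

section
/- There are continuum many sets I ⊆ ℕ satisfying: for every i, for all but finitely many n, the interval [l_i(2n), l_i(2n+2)) contains at most one element of the complement of I, where (l_i)_{i∈ω} is a fixed countable family of strictly increasing functions; consequently, one such I is non-computable. -/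
/-! ### Auxiliary construction -/

/-- A fast-growing sequence depending on a binary parameter `X`. -/
def seqA (l : ℕ → ℕ → ℕ) (X : ℕ → Bool) : ℕ → ℕ
  | 0 => cond (X 0) 1 0
  | k + 1 => ((Finset.range (k + 1)).sup fun i => l i (seqA l X k + 2)) + 1
      + cond (X (k + 1)) 1 0

lemma seqA_succ_gt (l : ℕ → ℕ → ℕ) (X : ℕ → Bool) {i k : ℕ} (hik : i ≤ k) :
    l i (seqA l X k + 2) < seqA l X (k + 1) := by
  have h : l i (seqA l X k + 2) ≤ (Finset.range (k + 1)).sup fun i => l i (seqA l X k + 2) :=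
    Finset.le_sup (f := fun i => l i (seqA l X k + 2))
      (Finset.mem_range.mpr (Nat.lt_succ_of_le hik))
  simp only [seqA]
  omega

lemma seqA_strictMono (l : ℕ → ℕ → ℕ) (hl : ∀ i, StrictMono (l i)) (X : ℕ → Bool) :
    StrictMono (seqA l X) := by
  apply strictMono_nat_of_lt_succ
  intro k
  have h := seqA_succ_gt l X (i := 0) (k := k) (Nat.zero_le k)
  have h2 : seqA l X k + 2 ≤ l 0 (seqA l X k + 2) := (hl 0).le_apply
  omega

lemma seqA_injective (l : ℕ → ℕ → ℕ) : Function.Injective (seqA l) := by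
  intro X Y h
  funext k
  match k with
  | 0 =>
      have h0 := congrFun h 0
      simp only [seqA] at h0
      cases hX : X 0 <;> cases hY : Y 0 <;> simp_all
  | k + 1 =>
      have h1 := congrFun h k
      have h2 := congrFun h (k + 1)
      simp only [seqA] at h2
      rw [h1] at h2
      cases hX : X (k + 1) <;> cases hY : Y (k + 1) <;> simp_all

lemma seqA_mem (l : ℕ → ℕ → ℕ) (hl : ∀ i, StrictMono (l i)) (X : ℕ → Bool) :
    ∀ i, ∀ᶠ n in Filter.atTop,
      (Set.Ico (l i (2 * n)) (l i (2 * n + 2)) ∩ ((Set.range (seqA l X))ᶜ)ᶜ).ncard ≤ 1 := by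
  intro i
  filter_upwards [Filter.eventually_ge_atTop (seqA l X i + 1)] with n hn
  rw [compl_compl]
  set T := Set.Ico (l i (2 * n)) (l i (2 * n + 2)) ∩ Set.range (seqA l X) with hT
  have hfin : T.Finite := (Set.finite_Ico _ _).subset Set.inter_subset_left
  rw [Set.ncard_le_one hfin]
  have hmono := seqA_strictMono l hl X
  have h2n : 2 * n ≤ l i (2 * n) := (hl i).le_apply
  -- key: no two distinct indices land in the interval
  have key : ∀ j j', j < j' → seqA l X j ∈ T → seqA l X j' ∈ T → False := by
    intro j j' hjj' ⟨⟨hj1, hj2⟩, _⟩ ⟨⟨hj1', hj2'⟩, _⟩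
    have hij : i < j := by
      have : seqA l X i < seqA l X j := by omega
      exact hmono.lt_iff_lt.mp this
    have h3 : l i (2 * n + 2) ≤ l i (seqA l X j + 2) := (hl i).monotone (by omega)
    have h4 : l i (seqA l X j + 2) < seqA l X (j + 1) := seqA_succ_gt l X (le_of_lt hij)
    have h5 : seqA l X (j + 1) ≤ seqA l X j' := hmono.monotone hjj'
    omega
  intro a ha b hb
  obtain ⟨j, rfl⟩ := ha.2
  obtain ⟨j', rfl⟩ := hb.2
  rcases lt_trichotomy j j' with h | h | h
  · exact absurd (key j j' h ha hb) (fun f => f.elim)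
  · rw [h]
  · exact absurd (key j' j h hb ha) (fun f => f.elim)

lemma computable_sets_countable : {I : Set ℕ | ComputableSet I}.Countable := by
  classical
  have key : ∀ I : {I : Set ℕ // ComputableSet I}, ∃ c : Nat.Partrec.Code,
      c.eval = fun n => Part.some (if n ∈ I.1 then 1 else 0) := by
    rintro ⟨I, hI⟩
    obtain ⟨D, hcomp⟩ := hI
    have hc : Computable fun n => (if n ∈ I then (1 : ℕ) else 0) := by
      have h1 : Computable fun n => (cond (decide (n ∈ I)) 1 0 : ℕ) :=
        Computable.cond hcomp (Computable.const 1) (Computable.const 0)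
      convert h1 using 1
      funext n
      by_cases h : n ∈ I <;> simp [h]
    have hp : Nat.Partrec (fun n => Part.some (if n ∈ I then (1 : ℕ) else 0) : ℕ →. ℕ) := by
      have := hc.partrec
      exact Partrec.nat_iff.mp this
    obtain ⟨c, hceval⟩ := Nat.Partrec.Code.exists_code.mp hp
    refine ⟨c, ?_⟩
    rw [hceval]
    funext n
    by_cases h : n ∈ I <;> simp [h]
  choose g hg using key
  have hginj : Function.Injective g := by
    intro I J h
    have hev := hg I
    rw [h, hg J] at hev
    apply Subtype.ext
    ext n
    have h2 := congrFun hev n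
    have h3 := Part.some_injective (congrFun hev n)
    by_cases hI : n ∈ I.1 <;> by_cases hJ : n ∈ J.1 <;> simp_all
  rw [Set.countable_iff_exists_injective]
  exact ⟨fun I => Encodable.encode (g ⟨I.1, I.2⟩),
    fun a b h => Subtype.ext (congrArg Subtype.val
      (hginj (Encodable.encode_injective h)))⟩

theorem continuum_many_sparse_complement_sets (l : ℕ → ℕ → ℕ)
    (hl : ∀ i, StrictMono (l i)) :
    Cardinal.mk {I : Set ℕ | ∀ i, ∀ᶠ n in Filter.atTop,
        (Set.Ico (l i (2 * n)) (l i (2 * n + 2)) ∩ Iᶜ).ncard ≤ 1} =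
      Cardinal.continuum ∧
    ∃ I : Set ℕ, (∀ i, ∀ᶠ n in Filter.atTop,
        (Set.Ico (l i (2 * n)) (l i (2 * n + 2)) ∩ Iᶜ).ncard ≤ 1) ∧
      ¬ ComputableSet I := by
  set S : Set (Set ℕ) := {I : Set ℕ | ∀ i, ∀ᶠ n in Filter.atTop,
      (Set.Ico (l i (2 * n)) (l i (2 * n + 2)) ∩ Iᶜ).ncard ≤ 1} with hS
  have hmemS : ∀ X : ℕ → Bool, (Set.range (seqA l X))ᶜ ∈ S := by
    intro X
    exact seqA_mem l hl X
  have hcard : Cardinal.mk S = Cardinal.continuum := by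
    apply le_antisymm
    · calc Cardinal.mk S ≤ Cardinal.mk (Set ℕ) := Cardinal.mk_set_le _
        _ = Cardinal.continuum := by
          rw [Cardinal.mk_set, Cardinal.mk_nat, Cardinal.two_power_aleph0]
    · have hf : Function.Injective
          (fun X : ℕ → Bool => (⟨(Set.range (seqA l X))ᶜ, hmemS X⟩ : S)) := by
        intro X Y h
        have h1 : (Set.range (seqA l X))ᶜ = (Set.range (seqA l Y))ᶜ :=
          congrArg Subtype.val h
        have h2 : Set.range (seqA l X) = Set.range (seqA l Y) :=
          compl_injective h1
        have h3 : seqA l X = seqA l Y :=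
          ((seqA_strictMono l hl X).range_inj (seqA_strictMono l hl Y)).mp h2
        exact seqA_injective l h3
      calc Cardinal.continuum = 2 ^ Cardinal.aleph0 := Cardinal.two_power_aleph0.symm
        _ = Cardinal.mk Bool ^ Cardinal.mk ℕ := by
            rw [Cardinal.mk_bool, Cardinal.mk_nat]
        _ = Cardinal.mk (ℕ → Bool) := Cardinal.power_def Bool ℕ
        _ ≤ Cardinal.mk S := Cardinal.mk_le_of_injective hf
  refine ⟨hcard, ?_⟩
  by_contra hcon
  push_neg at hcon
  have hsub : S ⊆ {I : Set ℕ | ComputableSet I} := by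
    intro I hI
    exact hcon I hI
  have hcnt : S.Countable := computable_sets_countable.mono hsub
  have : Cardinal.mk S ≤ Cardinal.aleph0 := hcnt.le_aleph0
  rw [hcard] at this
  exact absurd this (not_le.mpr Cardinal.aleph0_lt_continuum)
end

section
/- For any set I ⊆ ℕ containing at least one element in every interval (f(n), f(n+1)) for a strictly increasing f, and for any string σ of length f(m) and any i ∈ {0,1}, the I-subsequence of σ⌢i^{f(m+1)-f(m)} equals σ_I followed by a nonempty block of i's. -/
open Classical in
lemma filterMap_ite_replicate (p : ℕ → Prop) (i : Bool) (l : List ℕ) :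
    (l.filterMap fun x => if p x then some i else none) =
      List.replicate (l.countP fun x => decide (p x)) i := by
  induction l with
  | nil => simp
  | cons a l ih =>
    by_cases h : p a <;> simp [h, ih, List.replicate_succ, List.countP_cons]

theorem subseqStr_append_block (f : ℕ → ℕ) (hf : StrictMono f) (I : Set ℕ)
    (hI : ∀ n, (I ∩ Set.Ioo (f n) (f (n + 1))).Nonempty)
    (σ : List Bool) (m : ℕ) (hσ : σ.length = f m) (i : Bool) :
    ∃ k ≥ 1, subseqStr (σ ++ List.replicate (f (m + 1) - f m) i) I =
      subseqStr σ I ++ List.replicate k i := by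
  classical
  set a := f m with ha
  set b := f (m + 1) with hb
  have hab : a < b := hf (Nat.lt_succ_self m)
  set τ := σ ++ List.replicate (b - a) i with hτ
  have hlen : τ.length = b := by simp [hτ, hσ]; omega
  refine ⟨(List.range (b - a)).countP (fun k' => decide (a + k' ∈ I)), ?_, ?_⟩
  · obtain ⟨x, hxI, hx1, hx2⟩ := hI m
    have hmem : (x - a) ∈ List.range (b - a) := by simp; omega
    have hpos : 0 < (List.range (b - a)).countP (fun k' => decide (a + k' ∈ I)) := by
      refine List.countP_pos_iff.mpr ⟨x - a, hmem, ?_⟩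
      simp only [decide_eq_true_eq]
      convert hxI using 2
      omega
    omega
  · unfold subseqStr
    rw [hlen, hσ]
    have hbeq : b = a + (b - a) := by omega
    rw [hbeq, List.range_add, List.filterMap_append, List.filterMap_map]
    congr 1
    · apply List.filterMap_congr
      intro k hk
      simp only [List.mem_range] at hk
      have hk' : τ[k]? = σ[k]? := by
        rw [hτ]; exact List.getElem?_append_left (by omega)
      simp [hk']
    · have hcong : ∀ k ∈ List.range (b - a),
          ((fun k => if k ∈ I then τ[k]? else none) ∘ (a + ·)) k
            = (fun k => if a + k ∈ I then some i else none) k := by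
        intro k hk
        simp only [List.mem_range] at hk
        have hτk : τ[a + k]? = some i := by
          rw [hτ, List.getElem?_append_right (by omega)]
          rw [hσ]
          simp [List.getElem?_replicate]
          omega
        simp [Function.comp, hτk]
      rw [List.filterMap_congr hcong, filterMap_ite_replicate, Nat.add_sub_cancel_left]
end
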